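/- arXiv:2108.07054 — 5 statements merged into one kernel-verified Lean document; each statement's English description precedes it below -/
import Mathlib

section
/- Let S be a multiset of m complex numbers. Then there exists a unique multiset T of m complex numbers such that ∏_{s ∈ S} (x − s) = (1/m) ∑_{t ∈ T} (x − t)^m as polynomials in ℂ[x]. -/
open Polynomial Finset
noncomputable def mpsum (T : Multiset ℂ) (n : ℕ) : ℂ := (T.map (· ^ n)).sum

lemma aeval_psum {n : ℕ} (f : Fin n → ℂ) (k : ℕ) :
    MvPolynomial.aeval f (MvPolynomial.psum (Fin n) ℂ k) = mpsum (Finset.univ.val.map f) k := by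
  rw [MvPolynomial.psum, map_sum, mpsum, Multiset.map_map, ← Finset.sum_map_val]
  simp

lemma mpsum_newton (T : Multiset ℂ) (k : ℕ) :
    (k : ℂ) * T.esymm k = (-1) ^ (k + 1) *
      ∑ a ∈ (Finset.HasAntidiagonal.antidiagonal k).filter (fun a => a.1 < k),
        (-1 : ℂ) ^ a.1 * T.esymm a.1 * mpsum T a.2 := by
  induction T using Quotient.inductionOn with
  | _ L =>
    have key := congrArg (MvPolynomial.aeval L.get)
      (MvPolynomial.mul_esymm_eq_sum (Fin L.length) ℂ k)
    have hT : (Finset.univ.val.map L.get : Multiset ℂ) = ↑L := by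
      simp [Fin.univ_val_map, List.ofFn_get]
    simp only [map_mul, map_sum, map_pow, map_natCast, map_neg, map_one,
      MvPolynomial.aeval_esymm_eq_multiset_esymm, aeval_psum, hT] at key
    exact key

noncomputable def eAux (q : ℕ → ℂ) : ℕ → ℂ
  | 0 => 1
  | (k+1) => ((k+1 : ℕ) : ℂ)⁻¹ * ((-1 : ℂ) ^ (k+2) *
      ∑ a ∈ ((Finset.HasAntidiagonal.antidiagonal (k+1)).filter (fun a => a.1 < k+1)).attach,
        (-1 : ℂ) ^ (a : ℕ × ℕ).1 * eAux q (a : ℕ × ℕ).1 * q (a : ℕ × ℕ).2)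
  decreasing_by exact (Finset.mem_filter.mp a.2).2

lemma eAux_newton (q : ℕ → ℂ) (k : ℕ) (hk : 0 < k) :
    (k : ℂ) * eAux q k = (-1) ^ (k + 1) *
      ∑ a ∈ (Finset.HasAntidiagonal.antidiagonal k).filter (fun a => a.1 < k),
        (-1 : ℂ) ^ a.1 * eAux q a.1 * q a.2 := by
  obtain ⟨k, rfl⟩ := Nat.exists_eq_add_of_lt hk
  rw [zero_add, eAux, ← Finset.sum_attach ((Finset.HasAntidiagonal.antidiagonal (k+1)).filter (fun a => a.1 < k+1))
    (fun a => (-1 : ℂ) ^ a.1 * eAux q a.1 * q a.2)]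
  rw [← mul_assoc, mul_inv_cancel₀ (by exact_mod_cast Nat.succ_ne_zero k), one_mul]

lemma exists_multiset_esymm (m : ℕ) (e : ℕ → ℂ) (h0 : e 0 = 1) :
    ∃ T : Multiset ℂ, Multiset.card T = m ∧ ∀ j ≤ m, T.esymm j = e j := by
  set Q : ℂ[X] := ∑ j ∈ Finset.range (m+1), C ((-1 : ℂ) ^ j * e j) * X ^ (m - j) with hQ
  have hcoeff : ∀ i ≤ m, Q.coeff i = (-1 : ℂ) ^ (m - i) * e (m - i) := by
    intro i hi
    rw [hQ, finset_sum_coeff]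
    rw [Finset.sum_eq_single (m - i)]
    · rw [Nat.sub_sub_self hi, coeff_C_mul, coeff_X_pow, if_pos rfl, mul_one]
    · intro j hj hne
      have hj' := Finset.mem_range.mp hj
      have h2 : m - j ≠ i := by omega
      rw [coeff_C_mul, coeff_X_pow, if_neg (Ne.symm h2), mul_zero]
    · intro h
      exact absurd (Finset.mem_range.mpr (by omega)) h
  have hcoeff' : ∀ i, m < i → Q.coeff i = 0 := by
    intro i hi
    rw [hQ, finset_sum_coeff]
    refine Finset.sum_eq_zero fun j hj => ?_
    have h2 : m - j ≠ i := by have := Finset.mem_range.mp hj; omega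
    rw [coeff_C_mul, coeff_X_pow, if_neg (Ne.symm h2), mul_zero]
  have hdeg : Q.natDegree ≤ m := natDegree_le_iff_coeff_eq_zero.mpr hcoeff'
  have hm : Q.coeff m = 1 := by
    rw [hcoeff m le_rfl]; simp [h0]
  have hmonic : Q.Monic := by
    have hdegm : Q.natDegree = m := by
      refine le_antisymm hdeg ?_
      exact le_natDegree_of_ne_zero (by rw [hm]; exact one_ne_zero)
    rw [Monic, leadingCoeff, hdegm, hm]
  have hsplits : Q.Splits := IsAlgClosed.splits Q
  have hQne : Q ≠ 0 := hmonic.ne_zero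
  have hcard : Multiset.card Q.roots = m := by
    rw [splits_iff_card_roots.mp hsplits]
    refine le_antisymm hdeg ?_
    exact le_natDegree_of_ne_zero (by rw [hm]; exact one_ne_zero)
  refine ⟨Q.roots, hcard, fun j hj => ?_⟩
  have hprod : Q = (Q.roots.map fun a => X - C a).prod :=
    hsplits.eq_prod_roots_of_monic hmonic
  have hv := Multiset.prod_X_sub_C_coeff Q.roots (k := m - j) (by rw [hcard]; omega)
  rw [← hprod, hcard, Nat.sub_sub_self hj] at hv
  rw [hcoeff (m - j) (Nat.sub_le m j), Nat.sub_sub_self hj] at hv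
  have h1 : ((-1 : ℂ) ^ j) * ((-1 : ℂ) ^ j) = 1 := by
    rw [← pow_add]; exact Even.neg_one_pow ⟨j, by ring⟩
  calc Q.roots.esymm j = ((-1 : ℂ) ^ j * (-1 : ℂ) ^ j) * Q.roots.esymm j := by rw [h1, one_mul]
    _ = (-1 : ℂ) ^ j * ((-1 : ℂ) ^ j * Q.roots.esymm j) := by ring
    _ = (-1 : ℂ) ^ j * ((-1 : ℂ) ^ j * e j) := by rw [hv]
    _ = e j := by rw [← mul_assoc, h1, one_mul]

lemma eAux_zero (q : ℕ → ℂ) : eAux q 0 = 1 := by rw [eAux]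

lemma esymm_zero' (T : Multiset ℂ) : T.esymm 0 = 1 := by
  simp [Multiset.esymm]

lemma psum_exists_unique (m : ℕ) (q : ℕ → ℂ) :
    ∃! T : Multiset ℂ, Multiset.card T = m ∧ ∀ k, 1 ≤ k → k ≤ m → mpsum T k = q k := by
  have hneg : ∀ k : ℕ, ((-1 : ℂ) ^ (k+1)) ≠ 0 := fun k => pow_ne_zero _ (by norm_num)
  obtain ⟨T, hTcard, hTe⟩ := exists_multiset_esymm m (eAux q) (eAux_zero q)
  have hTq : ∀ k, 1 ≤ k → k ≤ m → mpsum T k = q k := by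
    intro k
    induction k using Nat.strong_induction_on with
    | _ k IH =>
      intro hk1 hkm
      have hN := mpsum_newton T k
      have hE := eAux_newton q k (by omega)
      rw [hTe k hkm] at hN
      have hN' : (k : ℂ) * eAux q k = (-1) ^ (k + 1) *
          ∑ a ∈ (Finset.HasAntidiagonal.antidiagonal k).filter (fun a => a.1 < k),
            (-1 : ℂ) ^ a.1 * eAux q a.1 * mpsum T a.2 := by
        rw [hN]
        congr 1
        refine Finset.sum_congr rfl fun a ha => ?_
        have ha' := Finset.mem_filter.mp ha
        rw [hTe a.1 (by omega)]
      have hsum := mul_left_cancel₀ (hneg k) (hN'.symm.trans hE)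
      have hdiff : ∑ a ∈ (Finset.HasAntidiagonal.antidiagonal k).filter (fun a => a.1 < k),
          ((-1 : ℂ) ^ a.1 * eAux q a.1 * mpsum T a.2
            - (-1 : ℂ) ^ a.1 * eAux q a.1 * q a.2) = mpsum T k - q k := by
        rw [Finset.sum_eq_single ((0, k) : ℕ × ℕ)]
        · simp [eAux_zero]
        · intro a ha hne
          have ha' := Finset.mem_filter.mp ha
          have hmem := Finset.HasAntidiagonal.mem_antidiagonal.mp ha'.1
          have ha1 : 1 ≤ a.1 := by
            rcases Nat.eq_zero_or_pos a.1 with h | h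
            · exfalso; apply hne
              have : a.2 = k := by omega
              exact Prod.ext h this
            · exact h
          have h2 : a.2 < k := by omega
          rw [IH a.2 h2 (by omega) (by omega), sub_self]
        · intro h
          exfalso; apply h
          simp only [Finset.mem_filter, Finset.HasAntidiagonal.mem_antidiagonal]
          exact ⟨by omega, by omega⟩
      rw [Finset.sum_sub_distrib, hsum, sub_self] at hdiff
      have := hdiff.symm
      rwa [sub_eq_zero] at this
  refine ⟨T, ⟨hTcard, hTq⟩, ?_⟩
  rintro T' ⟨hT'card, hT'q⟩
  -- uniqueness
  have hesymm : ∀ j, j ≤ m → T'.esymm j = T.esymm j := by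
    intro j
    induction j using Nat.strong_induction_on with
    | _ j IH =>
      intro hjm
      rcases Nat.eq_zero_or_pos j with rfl | hj1
      · rw [esymm_zero', esymm_zero']
      apply mul_left_cancel₀ (show (j : ℂ) ≠ 0 from Nat.cast_ne_zero.mpr (by omega))
      rw [mpsum_newton, mpsum_newton]
      congr 1
      refine Finset.sum_congr rfl fun a ha => ?_
      have ha' := Finset.mem_filter.mp ha
      have hmem := Finset.HasAntidiagonal.mem_antidiagonal.mp ha'.1
      rcases Nat.eq_zero_or_pos a.1 with h1 | h1
      · have : a.2 = j := by omega
        rw [h1, this, hT'q j hj1 hjm, hTq j hj1 hjm, esymm_zero', esymm_zero']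
      · rw [IH a.1 ha'.2 (by omega), hT'q a.2 (by omega) (by omega), hTq a.2 (by omega) (by omega)]
  have hprod : (T'.map fun t => (X : ℂ[X]) - C t).prod = (T.map fun t => (X : ℂ[X]) - C t).prod := by
    rw [Multiset.prod_X_sub_X_eq_sum_esymm, Multiset.prod_X_sub_X_eq_sum_esymm, hT'card, hTcard]
    refine Finset.sum_congr rfl fun j hj => ?_
    have := Finset.mem_range.mp hj
    rw [hesymm j (by omega)]
  have := congrArg Polynomial.roots hprod
  rwa [roots_multiset_prod_X_sub_C, roots_multiset_prod_X_sub_C] at this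

lemma mpsum_zero (T : Multiset ℂ) : mpsum T 0 = Multiset.card T := by
  simp [mpsum]

lemma coeff_sum_pow (T : Multiset ℂ) (m j : ℕ) :
    ((T.map fun t => ((X : ℂ[X]) - C t) ^ m).sum).coeff j
      = (m.choose j : ℂ) * (-1) ^ (m - j) * mpsum T (m - j) := by
  have h1 : ((T.map fun t => ((X : ℂ[X]) - C t) ^ m).sum).coeff j
      = (T.map fun t => ((((X : ℂ[X]) - C t) ^ m)).coeff j).sum := by
    have := map_multiset_sum (lcoeff ℂ j) (T.map fun t => ((X : ℂ[X]) - C t) ^ m)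
    simpa [Multiset.map_map, Function.comp_def, lcoeff_apply] using this
  rw [h1]
  have h2 : ∀ t : ℂ, (((X : ℂ[X]) - C t) ^ m).coeff j
      = (m.choose j : ℂ) * (-1) ^ (m - j) * t ^ (m - j) := by
    intro t
    rw [sub_eq_add_neg, ← C_neg, coeff_X_add_C_pow, neg_pow]
    ring
  rw [Multiset.map_congr rfl fun t _ => h2 t]
  rw [mpsum, ← Multiset.sum_map_mul_left]

/-- **Existence and uniqueness of the U transform.**
Given a multiset `S` of `m` complex numbers, there is a unique multiset `T` of `m`
complex numbers such that `∏_{s ∈ S} (X - s) = (1/m) ∑_{t ∈ T} (X - t)^m`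
as polynomials in `ℂ[X]`. -/
theorem u_transform_exists_unique (m : ℕ) (hm : 0 < m) (S : Multiset ℂ)
    (hS : Multiset.card S = m) :
    ∃! T : Multiset ℂ, Multiset.card T = m ∧
      (S.map fun s => (X : ℂ[X]) - C s).prod =
        (m : ℂ)⁻¹ • (T.map fun t => ((X : ℂ[X]) - C t) ^ m).sum := by
  set P : ℂ[X] := (S.map fun s => (X : ℂ[X]) - C s).prod with hP
  have hm0 : (m : ℂ) ≠ 0 := Nat.cast_ne_zero.mpr hm.ne'
  have hPmonic : P.Monic := monic_multiset_prod_of_monic _ _ fun s _ => monic_X_sub_C s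
  have hPdeg : P.natDegree = m := by
    rw [hP, natDegree_multiset_prod_of_monic _ (by
      intro p hp
      obtain ⟨s, _, rfl⟩ := Multiset.mem_map.mp hp
      exact monic_X_sub_C s)]
    simp [Multiset.map_map, Function.comp_def, hS]
  set q : ℕ → ℂ := fun k => (-1 : ℂ) ^ k * m * (m.choose k : ℂ)⁻¹ * P.coeff (m - k) with hq
  have key : ∀ T : Multiset ℂ, Multiset.card T = m →
      ((P = (m : ℂ)⁻¹ • (T.map fun t => ((X : ℂ[X]) - C t) ^ m).sum) ↔
        (∀ k, 1 ≤ k → k ≤ m → mpsum T k = q k)) := by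
    intro T hT
    constructor
    · intro h k hk1 hkm
      have hch : (m.choose k : ℂ) ≠ 0 := Nat.cast_ne_zero.mpr (Nat.choose_pos hkm).ne'
      have hc := congrArg (fun p : ℂ[X] => p.coeff (m - k)) h
      simp only [coeff_smul, coeff_sum_pow, smul_eq_mul, Nat.sub_sub_self hkm,
        Nat.choose_symm hkm] at hc
      show mpsum T k = (-1 : ℂ) ^ k * m * (m.choose k : ℂ)⁻¹ * P.coeff (m - k)
      rw [hc]
      field_simp
      ring_nf
      rw [pow_mul, show (((-1 : ℂ) ^ k) ^ 2) = 1 from by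
        rw [← pow_mul]; exact Even.neg_one_pow ⟨k, by ring⟩, mul_one]
    · intro h
      ext j
      rw [coeff_smul, coeff_sum_pow, smul_eq_mul]
      rcases lt_trichotomy j m with hj | rfl | hj
      · have hk1 : 1 ≤ m - j := by omega
        have hkm : m - j ≤ m := by omega
        have hch : (m.choose (m - j) : ℂ) ≠ 0 :=
          Nat.cast_ne_zero.mpr (Nat.choose_pos hkm).ne'
        rw [h (m - j) hk1 hkm, hq]
        simp only [Nat.sub_sub_self hj.le]
        rw [← Nat.choose_symm hkm, Nat.sub_sub_self hj.le]
        field_simp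
        ring_nf
        rw [pow_mul, show (((-1 : ℂ) ^ (m - j)) ^ 2) = 1 from by
          rw [← pow_mul]; exact Even.neg_one_pow ⟨m - j, by ring⟩, mul_one]
        have hchj : (m.choose j : ℂ) ≠ 0 := Nat.cast_ne_zero.mpr (Nat.choose_pos hj.le).ne'
        field_simp
      · rw [Nat.sub_self, mpsum_zero, hT]
        simp only [Nat.choose_self, Nat.cast_one, pow_zero, one_mul, mul_one]
        rw [inv_mul_cancel₀ hm0, ← hPdeg]
        exact hPmonic.coeff_natDegree
      · rw [coeff_eq_zero_of_natDegree_lt (by omega : P.natDegree < j),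
          Nat.choose_eq_zero_of_lt hj]
        simp
  obtain ⟨T, ⟨hTc, hTq⟩, huniq⟩ := psum_exists_unique m q
  exact ⟨T, ⟨hTc, (key T hTc).mpr hTq⟩, fun T' ⟨h1, h2⟩ => huniq T' ⟨h1, (key T' h1).mp h2⟩⟩
end

section
/- Let S be a multiset of m real numbers and let T be its U transform (a multiset of m complex numbers). Then for every nonnegative integer k, the power sum ∑_{t ∈ T} t^k is a real number. -/
open Polynomial

open Finset in
private lemma uaux_aeval_psum {m : ℕ} (f : Fin m → ℂ) (k : ℕ) :
    MvPolynomial.aeval f (MvPolynomial.psum (Fin m) ℝ k) = ∑ i, f i ^ k := by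
  simp [MvPolynomial.psum]

private lemma uaux_esymm_big {m k : ℕ} (hk : m < k) :
    MvPolynomial.esymm (Fin m) ℝ k = 0 := by
  rw [MvPolynomial.esymm]
  rw [Finset.powersetCard_eq_empty.2 (by simpa using hk)]
  simp

open Finset in
private lemma uaux_esymm_invariant {m : ℕ} (f g : Fin m → ℂ)
    (H : ∀ j, 1 ≤ j → j ≤ m → (∑ i, g i ^ j) = ∑ i, f i ^ j) :
    ∀ k, MvPolynomial.aeval g (MvPolynomial.esymm (Fin m) ℝ k)
      = MvPolynomial.aeval f (MvPolynomial.esymm (Fin m) ℝ k) := by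
  intro k
  induction k using Nat.strong_induction_on with
  | _ k ih =>
    rcases Nat.eq_zero_or_pos k with rfl | hk
    · simp
    rcases lt_or_ge m k with hkm | hkm
    · rw [uaux_esymm_big hkm]; simp
    · have hf := congrArg (MvPolynomial.aeval f) (MvPolynomial.mul_esymm_eq_sum (Fin m) ℝ k)
      have hg := congrArg (MvPolynomial.aeval g) (MvPolynomial.mul_esymm_eq_sum (Fin m) ℝ k)
      simp only [map_mul, map_sum, map_pow, map_neg, map_one, map_natCast] at hf hg
      have hsum : (∑ a ∈ (antidiagonal k).filter (fun a => a.1 < k),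
            (-1 : ℂ) ^ a.1 * MvPolynomial.aeval g (MvPolynomial.esymm (Fin m) ℝ a.1) *
              MvPolynomial.aeval g (MvPolynomial.psum (Fin m) ℝ a.2))
          = ∑ a ∈ (antidiagonal k).filter (fun a => a.1 < k),
            (-1 : ℂ) ^ a.1 * MvPolynomial.aeval f (MvPolynomial.esymm (Fin m) ℝ a.1) *
              MvPolynomial.aeval f (MvPolynomial.psum (Fin m) ℝ a.2) := by
        refine Finset.sum_congr rfl ?_
        intro a ha
        rw [Finset.mem_filter, Finset.HasAntidiagonal.mem_antidiagonal] at ha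
        have h1 : a.1 < k := ha.2
        have h2 : 1 ≤ a.2 := by omega
        have h3 : a.2 ≤ m := by omega
        rw [ih a.1 h1, uaux_aeval_psum, uaux_aeval_psum, H a.2 h2 h3]
      have hcomb : (k : ℂ) * MvPolynomial.aeval g (MvPolynomial.esymm (Fin m) ℝ k)
          = (k : ℂ) * MvPolynomial.aeval f (MvPolynomial.esymm (Fin m) ℝ k) := by
        rw [hf, hg, hsum]
      exact mul_left_cancel₀ (Nat.cast_ne_zero.2 hk.ne') hcomb

open Finset in
private lemma uaux_psum_invariant {m : ℕ} (f g : Fin m → ℂ)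
    (H : ∀ j, 1 ≤ j → j ≤ m → (∑ i, g i ^ j) = ∑ i, f i ^ j) :
    ∀ k, (∑ i, g i ^ k) = ∑ i, f i ^ k := by
  intro k
  induction k using Nat.strong_induction_on with
  | _ k ih =>
    rcases Nat.eq_zero_or_pos k with rfl | hk
    · simp
    rcases le_or_gt k m with hkm | hkm
    · exact H k hk hkm
    · have hf := congrArg (MvPolynomial.aeval f)
        (MvPolynomial.psum_eq_mul_esymm_sub_sum (Fin m) ℝ k hk)
      have hg := congrArg (MvPolynomial.aeval g)
        (MvPolynomial.psum_eq_mul_esymm_sub_sum (Fin m) ℝ k hk)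
      simp only [map_mul, map_sum, map_pow, map_neg, map_one, map_natCast, map_sub] at hf hg
      rw [uaux_aeval_psum] at hf hg
      rw [hf, hg, uaux_esymm_invariant f g H k]
      congr 1
      refine Finset.sum_congr rfl ?_
      intro a ha
      rw [Finset.mem_filter, Finset.HasAntidiagonal.mem_antidiagonal] at ha
      have h2 : a.2 < k := by
        have h3 := ha.2
        simp [Set.mem_Ioo] at h3
        omega
      rw [uaux_esymm_invariant f g H a.1, uaux_aeval_psum, uaux_aeval_psum, ih a.2 h2]

/-- **Power sums of the U transform of a real multiset are real.**
If `S` is a multiset of `m` real numbers and `T` is its U transform (the multiset of `m`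
complex numbers with `∏_{s ∈ S}(X - s) = (1/m) ∑_{t ∈ T}(X - t)^m`), then for every
nonnegative integer `k` the power sum `∑_{t ∈ T} t^k` is a real number. -/
theorem u_transform_power_sums_real (m : ℕ) (S : Multiset ℝ) (T : Multiset ℂ)
    (hS : Multiset.card S = m) (hT : Multiset.card T = m)
    (hU : (S.map fun s => (X : ℂ[X]) - C (s : ℂ)).prod =
        (m : ℂ)⁻¹ • (T.map fun t => ((X : ℂ[X]) - C t) ^ m).sum) :
    ∀ k : ℕ, ∃ r : ℝ, (T.map fun t => t ^ k).sum = (r : ℂ) := by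
  intro k
  simp only [bind_pure_comp, Multiset.fmap_def] at hU
  rcases Nat.eq_zero_or_pos m with rfl | hm
  · rw [Multiset.card_eq_zero] at hT
    subst hT
    exact ⟨0, by simp⟩
  have hmC : (m : ℂ) ≠ 0 := Nat.cast_ne_zero.2 hm.ne'
  -- enumerate T by Fin m
  set l := T.toList with hl
  have hlen : l.length = m := by rw [hl, Multiset.length_toList, hT]
  set f : Fin m → ℂ := fun i => l.get (Fin.cast hlen.symm i) with hfdef
  have hTsum : ∀ {β : Type} [AddCommMonoid β] (h : ℂ → β),
      (T.map h).sum = ∑ i, h (f i) := by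
    intro β _ h
    have hTl : T = (l : Multiset ℂ) := (Multiset.coe_toList T).symm
    calc (T.map h).sum = (l.map h).sum := by rw [hTl]; rfl
      _ = ∑ i : Fin l.length, h (l.get i) := by
          conv_lhs => rw [← List.ofFn_get l]
          rw [List.map_ofFn, List.sum_ofFn]
          rfl
      _ = ∑ i, h (f i) :=
          Fintype.sum_equiv (finCongr hlen) _ _ (fun i => rfl)
  -- key polynomial identity
  have hQ : (T.map fun t => ((X : ℂ[X]) - C t) ^ m).sum
      = (m : ℂ) • ((S.map (fun a : ℝ => (a : ℂ))).map (fun s : ℂ => (X : ℂ[X]) - C s)).prod := by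
    rw [hU, smul_smul, mul_inv_cancel₀ hmC, one_smul]
  have hSfix : Polynomial.map (starRingEnd ℂ)
        (((S.map (fun a : ℝ => (a : ℂ))).map (fun s : ℂ => (X : ℂ[X]) - C s)).prod)
      = ((S.map (fun a : ℝ => (a : ℂ))).map (fun s : ℂ => (X : ℂ[X]) - C s)).prod := by
    rw [Polynomial.map_multiset_prod, Multiset.map_map]
    congr 1
    refine Multiset.map_congr rfl ?_
    intro s hs
    obtain ⟨a, _, rfl⟩ := Multiset.mem_map.mp hs
    simp [Polynomial.map_sub, Complex.conj_ofReal]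
  have hconjQ : (T.map fun t => ((X : ℂ[X]) - C ((starRingEnd ℂ) t)) ^ m).sum
      = (T.map fun t => ((X : ℂ[X]) - C t) ^ m).sum := by
    have hmap : Polynomial.map (starRingEnd ℂ) ((T.map fun t => ((X : ℂ[X]) - C t) ^ m).sum)
        = (T.map fun t => ((X : ℂ[X]) - C ((starRingEnd ℂ) t)) ^ m).sum := by
      rw [show Polynomial.map (starRingEnd ℂ) = ⇑(Polynomial.mapRingHom (starRingEnd ℂ)) from rfl,
        map_multiset_sum, Multiset.map_map]
      congr 1
      refine Multiset.map_congr rfl ?_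
      intro t _
      simp [Function.comp, Polynomial.coe_mapRingHom, Polynomial.map_pow, Polynomial.map_sub]
    rw [← hmap, hQ, Polynomial.smul_eq_C_mul, Polynomial.map_mul, Polynomial.map_C, hSfix]
    rw [map_natCast (starRingEnd ℂ), ← Polynomial.smul_eq_C_mul]
  -- extract power sum equalities for 1 ≤ j ≤ m
  have H : ∀ j, 1 ≤ j → j ≤ m → (∑ i, (starRingEnd ℂ) (f i) ^ j) = ∑ i, f i ^ j := by
    intro j hj1 hjm
    have hEQ := congrArg (fun p => Polynomial.coeff p (m - j)) hconjQ
    rw [hTsum (fun t => ((X : ℂ[X]) - C ((starRingEnd ℂ) t)) ^ m),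
        hTsum (fun t => ((X : ℂ[X]) - C t) ^ m)] at hEQ
    have hco : ∀ a : ℂ, (((X : ℂ[X]) - C a) ^ m).coeff (m - j)
        = (-a) ^ j * (m.choose (m - j) : ℂ) := by
      intro a
      rw [sub_eq_add_neg, ← map_neg C, Polynomial.coeff_X_add_C_pow]
      congr 2
      omega
    simp only [Polynomial.finset_sum_coeff, hco] at hEQ
    have hc : ((-1 : ℂ)) ^ j * (m.choose (m - j) : ℂ) ≠ 0 := by
      apply mul_ne_zero (pow_ne_zero _ (by norm_num))
      exact Nat.cast_ne_zero.2 (Nat.choose_pos (Nat.sub_le m j)).ne'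
    have hEQ' : (∑ i, (starRingEnd ℂ) (f i) ^ j) * ((-1 : ℂ) ^ j * (m.choose (m - j) : ℂ))
        = (∑ i, f i ^ j) * ((-1 : ℂ) ^ j * (m.choose (m - j) : ℂ)) := by
      rw [Finset.sum_mul, Finset.sum_mul]
      calc _ = ∑ i, (-(starRingEnd ℂ) (f i)) ^ j * (m.choose (m - j) : ℂ) := by
              refine Finset.sum_congr rfl fun i _ => ?_
              rw [neg_pow]; ring
        _ = ∑ i, (-(f i)) ^ j * (m.choose (m - j) : ℂ) := hEQ
        _ = _ := by
              refine Finset.sum_congr rfl fun i _ => ?_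
              rw [neg_pow]; ring
    exact mul_right_cancel₀ hc hEQ'
  have hall := uaux_psum_invariant f (fun i => (starRingEnd ℂ) (f i)) H k
  have hz : (starRingEnd ℂ) (∑ i, f i ^ k) = ∑ i, f i ^ k := by
    rw [map_sum]
    simpa [map_pow] using hall
  obtain ⟨r, hr⟩ := Complex.conj_eq_iff_real.mp hz
  exact ⟨r, by rw [hTsum (fun t => t ^ k), hr]⟩
end

section
/- Let p and q be monic complex polynomials of degree m, and let S = {s_1, …, s_m} and T = {t_1, …, t_m} be the U transforms of the multisets of roots of p and of q, respectively. Then [p ⊞_m q](x) = (1/m²) ∑_{i=1}^m ∑_{j=1}^m (x − s_i − t_j)^m as polynomials in x. -/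
open Polynomial

/-- The symmetric additive convolution of two polynomials of degree (at most) `m`:
`[p ⊞_m q](x) = (1/m!) ∑_{i=0}^m p^{(i)}(x) · q^{(m-i)}(0)`. -/
noncomputable def boxplus (m : ℕ) (p q : ℂ[X]) : ℂ[X] :=
  (m.factorial : ℂ)⁻¹ •
    ∑ i ∈ Finset.range (m + 1),
      C ((Polynomial.derivative^[m - i] q).eval 0) * Polynomial.derivative^[i] p

lemma boxplus_zero_left (m : ℕ) (q : ℂ[X]) : boxplus m 0 q = 0 := by
  simp [boxplus]

lemma boxplus_add_left (m : ℕ) (p₁ p₂ q : ℂ[X]) :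
    boxplus m (p₁ + p₂) q = boxplus m p₁ q + boxplus m p₂ q := by
  simp [boxplus, iterate_map_add, mul_add, Finset.sum_add_distrib, smul_add]

lemma boxplus_smul_left (m : ℕ) (c : ℂ) (p q : ℂ[X]) :
    boxplus m (c • p) q = c • boxplus m p q := by
  simp only [boxplus, iterate_derivative_smul, Finset.smul_sum, mul_smul_comm, smul_comm c]

lemma boxplus_zero_right (m : ℕ) (p : ℂ[X]) : boxplus m p 0 = 0 := by
  simp [boxplus]

lemma boxplus_add_right (m : ℕ) (p q₁ q₂ : ℂ[X]) :
    boxplus m p (q₁ + q₂) = boxplus m p q₁ + boxplus m p q₂ := by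
  simp [boxplus, iterate_map_add, add_mul, Finset.sum_add_distrib, smul_add]

lemma boxplus_smul_right (m : ℕ) (c : ℂ) (p q : ℂ[X]) :
    boxplus m p (c • q) = c • boxplus m p q := by
  simp only [boxplus, iterate_derivative_smul, eval_smul, smul_eq_mul, map_mul,
    Finset.smul_sum, smul_smul]
  refine Finset.sum_congr rfl fun i _ => ?_
  rw [Polynomial.smul_eq_C_mul, Polynomial.smul_eq_C_mul, map_mul]
  ring

lemma boxplus_msum_left (m : ℕ) (f : ℂ → ℂ[X]) (S : Multiset ℂ) (q : ℂ[X]) :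
    boxplus m (S.map f).sum q = (S.map fun s => boxplus m (f s) q).sum := by
  induction S using Multiset.induction with
  | empty => simp [boxplus_zero_left]
  | cons a S ih => simp [boxplus_add_left, ih]

lemma boxplus_msum_right (m : ℕ) (g : ℂ → ℂ[X]) (T : Multiset ℂ) (p : ℂ[X]) :
    boxplus m p (T.map g).sum = (T.map fun t => boxplus m p (g t)).sum := by
  induction T using Multiset.induction with
  | empty => simp [boxplus_zero_right]
  | cons a T ih => simp [boxplus_add_right, ih]

lemma boxplus_pow (m : ℕ) (s t : ℂ) :
    boxplus m ((X - C s) ^ m) ((X - C t) ^ m) = ((X : ℂ[X]) - C s - C t) ^ m := by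
  have hexp : ((X : ℂ[X]) - C s - C t) ^ m =
      ∑ i ∈ Finset.range (m + 1), C (-t) ^ i * (X - C s) ^ (m - i) * (m.choose i : ℂ[X]) := by
    rw [show (X : ℂ[X]) - C s - C t = C (-t) + (X - C s) by rw [map_neg]; ring, add_pow]
  rw [hexp, boxplus, Finset.smul_sum]
  refine Finset.sum_congr rfl fun i hi => ?_
  rw [Finset.mem_range, Nat.lt_succ_iff] at hi
  rw [Polynomial.iterate_derivative_X_sub_pow, Polynomial.iterate_derivative_X_sub_pow,
    Nat.sub_sub_self hi]
  have hnat : m.descFactorial (m - i) * m.descFactorial i = m.choose i * m.factorial := by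
    rw [Nat.descFactorial_eq_factorial_mul_choose, Nat.choose_symm hi,
      mul_comm ((m - i).factorial), mul_assoc, Nat.factorial_mul_descFactorial hi]
  have hc : ((m.factorial : ℂ))⁻¹ * ((m.descFactorial (m - i) : ℂ) * (m.descFactorial i : ℂ)) =
      (m.choose i : ℂ) := by
    have hf : (m.factorial : ℂ) ≠ 0 := Nat.cast_ne_zero.mpr m.factorial_ne_zero
    field_simp
    exact_mod_cast hnat.trans (mul_comm _ _)
  simp only [nsmul_eq_mul, eval_mul, eval_natCast, eval_pow, eval_sub, eval_X, eval_C, zero_sub,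
    map_mul, map_pow]
  rw [Polynomial.smul_eq_C_mul]
  simp only [← Polynomial.C_eq_natCast]
  have hC : C ((m.factorial : ℂ))⁻¹ * C ((m.descFactorial (m - i) : ℂ)) *
      C ((m.descFactorial i : ℂ)) = C ((m.choose i : ℂ)) := by
    rw [← map_mul, ← map_mul]
    exact congrArg C (by rw [← hc]; ring)
  linear_combination (C (-t)) ^ i * (X - C s) ^ (m - i) * hC

/-- **Additive convolution via the U transform.**
If `p`, `q` are monic complex polynomials of degree `m` and `S`, `T` are the U transforms
of their root multisets, then `[p ⊞_m q](x) = (1/m²) ∑_{s ∈ S} ∑_{t ∈ T} (x - s - t)^m`. -/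
theorem boxplus_eq_u_transform_sum (m : ℕ) (p q : ℂ[X])
    (hp : p.Monic) (hq : q.Monic) (hpd : p.natDegree = m) (hqd : q.natDegree = m)
    (S T : Multiset ℂ) (hS : Multiset.card S = m) (hT : Multiset.card T = m)
    (hUS : (p.roots.map fun r => (X : ℂ[X]) - C r).prod =
        (m : ℂ)⁻¹ • (S.map fun s => ((X : ℂ[X]) - C s) ^ m).sum)
    (hUT : (q.roots.map fun r => (X : ℂ[X]) - C r).prod =
        (m : ℂ)⁻¹ • (T.map fun t => ((X : ℂ[X]) - C t) ^ m).sum) :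
    boxplus m p q =
      ((m : ℂ) ^ 2)⁻¹ •
        (S.map fun s => (T.map fun t => ((X : ℂ[X]) - C s - C t) ^ m).sum).sum := by
  rcases Nat.eq_zero_or_pos m with hm | hm
  · exfalso
    subst hm
    have hp1 : p = 1 := hp.natDegree_eq_zero.1 hpd
    rw [hp1] at hUS
    simp at hUS
  · have hPe : p = (m : ℂ)⁻¹ • (S.map fun s => ((X : ℂ[X]) - C s) ^ m).sum := by
      rw [← hUS]
      exact (IsAlgClosed.splits p).eq_prod_roots_of_monic hp
    have hQe : q = (m : ℂ)⁻¹ • (T.map fun t => ((X : ℂ[X]) - C t) ^ m).sum := by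
      rw [← hUT]
      exact (IsAlgClosed.splits q).eq_prod_roots_of_monic hq
    rw [hPe, hQe, boxplus_smul_left, boxplus_smul_right, boxplus_msum_left]
    simp only [boxplus_msum_right, boxplus_pow]
    rw [smul_smul, ← mul_inv, ← sq]
end

section
/- Let p and q be monic complex polynomials of degree m, and let S = {s_1, …, s_m} and T = {t_1, …, t_m} be the U transforms of the multisets of roots of p and of q, respectively. Then [p ⊠_m q](x) = (1/m²) ∑_{i=1}^m ∑_{j=1}^m (x − s_i t_j)^m as polynomials in x. -/
open Polynomial

lemma coeff_X_sub_C_pow' (a : ℂ) (m n : ℕ) :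
    (((X : ℂ[X]) - C a) ^ m).coeff n = (-a) ^ (m - n) * (m.choose n : ℂ) := by
  rw [sub_eq_add_neg, ← C_neg, coeff_X_add_C_pow]

lemma coeff_of_u (m : ℕ) (p : ℂ[X]) (hp : p.Monic)
    (S : Multiset ℂ)
    (hUS : (p.roots.map fun r => (X : ℂ[X]) - C r).prod =
        (m : ℂ)⁻¹ • (S.map fun s => ((X : ℂ[X]) - C s) ^ m).sum) (n : ℕ) :
    p.coeff n = (m : ℂ)⁻¹ * ((S.map fun s => (-s) ^ (m - n)).sum * (m.choose n : ℂ)) := by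
  have h1 : p = (p.roots.map fun r => (X : ℂ[X]) - C r).prod :=
    (IsAlgClosed.splits p).eq_prod_roots_of_monic hp
  rw [h1, hUS]
  rw [coeff_smul]
  congr 1
  have h2 : ((S.map fun s => ((X : ℂ[X]) - C s) ^ m).sum).coeff n
      = (lcoeff ℂ n) (S.map fun s => ((X : ℂ[X]) - C s) ^ m).sum := rfl
  rw [h2, map_multiset_sum, Multiset.map_map, ← Multiset.sum_map_mul_right]
  congr 1
  congr 1
  ext s
  simp [coeff_X_sub_C_pow']

lemma coeff_msum (n : ℕ) (U : Multiset ℂ[X]) :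
    U.sum.coeff n = (U.map fun f => f.coeff n).sum := by
  induction U using Multiset.induction with
  | empty => simp
  | cons a s ih => simp [ih]

lemma msum_mul (U V : Multiset ℂ) (f g : ℂ → ℂ) :
    (U.map fun s => (V.map fun t => f s * g t).sum).sum
      = (U.map f).sum * (V.map g).sum := by
  simp only [Multiset.sum_map_mul_left]
  exact Multiset.sum_map_mul_right

/-- The symmetric multiplicative convolution of two degree-`m` polynomials
`p(x) = ∑ (-1)^i p_i x^{m-i}`, `q(x) = ∑ (-1)^i q_i x^{m-i}`:
`[p ⊠_m q](x) = ∑_{i=0}^m x^{m-i} (-1)^i p_i q_i / C(m,i)`.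
(Here `p_i = (-1)^i · coeff p (m-i)`, so the `i`-th term is
`(-1)^i · coeff p (m-i) · coeff q (m-i) / C(m,i) · x^{m-i}`.) -/
noncomputable def boxtimes (m : ℕ) (p q : ℂ[X]) : ℂ[X] :=
  ∑ i ∈ Finset.range (m + 1),
    C ((-1 : ℂ) ^ i * p.coeff (m - i) * q.coeff (m - i) / (m.choose i : ℂ)) *
      (X : ℂ[X]) ^ (m - i)

/-- **Multiplicative convolution via the U transform.**
If `p`, `q` are monic complex polynomials of degree `m` and `S`, `T` are the U transforms
of their root multisets, then `[p ⊠_m q](x) = (1/m²) ∑_{s ∈ S} ∑_{t ∈ T} (x - s·t)^m`. -/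
theorem boxtimes_eq_u_transform_sum (m : ℕ) (p q : ℂ[X])
    (hp : p.Monic) (hq : q.Monic) (hpd : p.natDegree = m) (hqd : q.natDegree = m)
    (S T : Multiset ℂ) (hS : Multiset.card S = m) (hT : Multiset.card T = m)
    (hUS : (p.roots.map fun r => (X : ℂ[X]) - C r).prod =
        (m : ℂ)⁻¹ • (S.map fun s => ((X : ℂ[X]) - C s) ^ m).sum)
    (hUT : (q.roots.map fun r => (X : ℂ[X]) - C r).prod =
        (m : ℂ)⁻¹ • (T.map fun t => ((X : ℂ[X]) - C t) ^ m).sum) :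
    boxtimes m p q =
      ((m : ℂ) ^ 2)⁻¹ •
        (S.map fun s => (T.map fun t => ((X : ℂ[X]) - C (s * t)) ^ m).sum).sum := by
  classical
  have hm : m ≠ 0 := by
    intro h; subst h
    rw [hp.natDegree_eq_zero.mp hpd] at hUS
    simp at hUS
  have hmC : (m : ℂ) ≠ 0 := Nat.cast_ne_zero.mpr hm
  ext n
  set k := m - n with hk
  set A := (S.map fun s => (-s) ^ k).sum with hA
  set B := (T.map fun t => t ^ k).sum with hB
  have hB' : (T.map fun t => (-t) ^ k).sum = (-1 : ℂ) ^ k * B := by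
    rw [hB, ← Multiset.sum_map_mul_left]
    exact congrArg Multiset.sum (Multiset.map_congr rfl fun t _ => by ring)
  have hP : p.coeff n = (m : ℂ)⁻¹ * (A * (m.choose n : ℂ)) := coeff_of_u m p hp S hUS n
  have hQ : q.coeff n = (m : ℂ)⁻¹ * ((-1 : ℂ) ^ k * B * (m.choose n : ℂ)) := by
    rw [coeff_of_u m q hq T hUT n, ← hk, hB']
  have hR : ((((m : ℂ) ^ 2)⁻¹ •
        (S.map fun s => (T.map fun t => ((X : ℂ[X]) - C (s * t)) ^ m).sum).sum)).coeff n
      = ((m : ℂ) ^ 2)⁻¹ * (A * (B * (m.choose n : ℂ))) := by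
    rw [coeff_smul, coeff_msum, Multiset.map_map, smul_eq_mul]
    congr 1
    have h3 : ∀ s : ℂ, ((T.map fun t => ((X : ℂ[X]) - C (s * t)) ^ m).sum).coeff n
        = (T.map fun t => (-s) ^ k * (t ^ k * (m.choose n : ℂ))).sum := by
      intro s
      rw [coeff_msum, Multiset.map_map]
      refine congrArg Multiset.sum (Multiset.map_congr rfl fun t _ => ?_)
      simp only [Function.comp_apply, coeff_X_sub_C_pow']
      rw [← hk]
      ring
    calc (S.map fun s =>
            (fun f : ℂ[X] => f.coeff n) ((T.map fun t => ((X : ℂ[X]) - C (s * t)) ^ m).sum)).sum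
        = (S.map fun s => (T.map fun t => (-s) ^ k * (t ^ k * (m.choose n : ℂ))).sum).sum := by
          exact congrArg Multiset.sum (Multiset.map_congr rfl fun s _ => h3 s)
      _ = A * (T.map fun t => t ^ k * (m.choose n : ℂ)).sum :=
          msum_mul S T (fun s => (-s) ^ k) (fun t => t ^ k * (m.choose n : ℂ))
      _ = A * (B * (m.choose n : ℂ)) := by rw [hB, Multiset.sum_map_mul_right]
  rw [hR]
  rcases le_or_gt n m with hn | hn
  · have hkn : m - k = n := by omega
    have hL : (boxtimes m p q).coeff n
        = (-1 : ℂ) ^ k * p.coeff n * q.coeff n / (m.choose n : ℂ) := by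
      unfold boxtimes
      rw [finset_sum_coeff, Finset.sum_eq_single k]
      · rw [coeff_C_mul, coeff_X_pow, hkn, if_pos rfl, Nat.choose_symm hn]
        ring_nf
      · intro i hi hik
        have hi' : i ≤ m := by simpa [Nat.lt_succ_iff] using Finset.mem_range.mp hi
        have : n ≠ m - i := by omega
        simp [coeff_C_mul, coeff_X_pow, this]
      · intro h
        exact absurd (Finset.mem_range.mpr (by omega)) h
    have hcne : (m.choose n : ℂ) ≠ 0 := by
      exact_mod_cast (Nat.choose_pos hn).ne'
    have he : (-1 : ℂ) ^ k * (-1 : ℂ) ^ k = 1 := by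
      rw [← mul_pow]; norm_num
    rw [hL, hP, hQ, div_eq_iff hcne, pow_two, mul_inv]
    linear_combination (A * B * (m.choose n : ℂ) * (m.choose n : ℂ) * (↑m)⁻¹ * (↑m)⁻¹) * he
  · have hL : (boxtimes m p q).coeff n = 0 := by
      unfold boxtimes
      rw [finset_sum_coeff]
      apply Finset.sum_eq_zero
      intro i hi
      have hi' : i ≤ m := by simpa [Nat.lt_succ_iff] using Finset.mem_range.mp hi
      have : n ≠ m - i := by omega
      simp [coeff_C_mul, coeff_X_pow, this]
    rw [hL, Nat.choose_eq_zero_of_lt hn]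
    simp
end

section
/- Let A be an m×m real diagonal matrix and let B be an m×m real symmetric matrix all of whose diagonal entries are 0. Then the function f(t) = λ_max(A + tB), the largest eigenvalue of A + tB, is monotone nondecreasing for t ≥ 0. -/
open Matrix

section Aux

variable {m : ℕ}

private lemma bdd (f : Fin m → ℝ) : BddAbove (Set.range f) :=
  Set.Finite.bddAbove (Set.finite_range f)

/-- Rayleigh quotient of a unit vector is at most the largest eigenvalue. -/
private lemma quad_le_iSup [Nonempty (Fin m)] {M : Matrix (Fin m) (Fin m) ℝ}
    (hM : M.IsHermitian) (x : Fin m → ℝ) (hx : x ⬝ᵥ x = 1) :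
    x ⬝ᵥ (M *ᵥ x) ≤ ⨆ i, hM.eigenvalues i := by
  classical
  set U : Matrix (Fin m) (Fin m) ℝ := ↑hM.eigenvectorUnitary with hU
  have hstar : star U = Uᵀ := by
    rw [Matrix.star_eq_conjTranspose, conjTranspose_eq_transpose_of_trivial]
  set y : Fin m → ℝ := star U *ᵥ x with hy
  have hUU : U * star U = 1 := Matrix.mem_unitaryGroup_iff.mp hM.eigenvectorUnitary.2
  have hxy : ∀ w : Fin m → ℝ, x ⬝ᵥ (U *ᵥ w) = y ⬝ᵥ w := by
    intro w
    rw [dotProduct_mulVec, hy, hstar, mulVec_transpose]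
  have hyy : y ⬝ᵥ y = 1 := by
    have h1 : y ⬝ᵥ y = x ⬝ᵥ (U *ᵥ y) := (hxy y).symm
    rw [h1, hy, mulVec_mulVec, hUU, one_mulVec, hx]
  have hMx : x ⬝ᵥ (M *ᵥ x) = ∑ i, hM.eigenvalues i * (y i)^2 := by
    conv_lhs => rw [hM.spectral_theorem, Unitary.conjStarAlgAut_apply]
    rw [← Matrix.mulVec_mulVec, ← Matrix.mulVec_mulVec, hxy]
    simp only [dotProduct, mulVec_diagonal, Function.comp_apply, RCLike.ofReal_real_eq_id,
      id_eq]
    exact Finset.sum_congr rfl fun i _ => by ring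
  rw [hMx]
  calc ∑ i, hM.eigenvalues i * (y i)^2
      ≤ ∑ i, (⨆ j, hM.eigenvalues j) * (y i)^2 :=
        Finset.sum_le_sum fun i _ =>
          mul_le_mul_of_nonneg_right (le_ciSup (bdd _) i) (sq_nonneg _)
    _ = (⨆ j, hM.eigenvalues j) * ∑ i, (y i)^2 := by rw [Finset.mul_sum]
    _ = ⨆ j, hM.eigenvalues j := by
        have h2 : ∑ i, (y i)^2 = 1 := by
          rw [← hyy]; simp [dotProduct, sq]
        rw [h2, mul_one]

/-- Each eigenvalue equals the Rayleigh quotient of its (unit) eigenvector. -/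
private lemma eigen_eq {M : Matrix (Fin m) (Fin m) ℝ} (hM : M.IsHermitian) (k : Fin m) :
    hM.eigenvalues k = (⇑(hM.eigenvectorBasis k)) ⬝ᵥ (M *ᵥ ⇑(hM.eigenvectorBasis k)) := by
  simpa using hM.eigenvalues_eq k

private lemma eigvec_unit {M : Matrix (Fin m) (Fin m) ℝ} (hM : M.IsHermitian) (k : Fin m) :
    (⇑(hM.eigenvectorBasis k)) ⬝ᵥ (⇑(hM.eigenvectorBasis k)) = 1 := by
  have h := hM.eigenvectorBasis.orthonormal.1 k
  have h2 : (inner ℝ (hM.eigenvectorBasis k) (hM.eigenvectorBasis k) : ℝ) = 1 := by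
    rw [real_inner_self_eq_norm_sq, h]; norm_num
  simp only [PiLp.inner_apply, RCLike.inner_apply, conj_trivial] at h2
  simpa only [dotProduct] using h2

end Aux

/-- **Monotonicity of the largest eigenvalue.** Let `A` be an `m × m` real diagonal
matrix and `B` an `m × m` real symmetric matrix with zero diagonal. Then
`t ↦ λ_max(A + t B)` is monotone nondecreasing for `t ≥ 0`. -/
theorem lambdaMax_monotone (m : ℕ) (A B : Matrix (Fin m) (Fin m) ℝ)
    (hA : A.IsDiag) (hB : B.IsSymm) (hBdiag : ∀ i, B i i = 0)
    (s t : ℝ) (hs : 0 ≤ s) (hst : s ≤ t)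
    (hsH : (A + s • B).IsHermitian) (htH : (A + t • B).IsHermitian) :
    (⨆ i, hsH.eigenvalues i) ≤ ⨆ i, htH.eigenvalues i := by
  classical
  rcases eq_or_lt_of_le hst with rfl | hlt
  · exact le_of_eq rfl
  rcases Nat.eq_zero_or_pos m with h0 | hm
  · subst h0
    simp [Real.iSup_of_isEmpty]
  haveI : Nonempty (Fin m) := ⟨⟨0, hm⟩⟩
  have ht : 0 < t := lt_of_le_of_lt hs hlt
  have hA0 : A.IsHermitian := by
    rw [Matrix.IsHermitian, conjTranspose_eq_transpose_of_trivial]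
    exact hA.isSymm
  -- Step A : sup of A's eigenvalues ≤ λmax (A + t B)
  obtain ⟨i0, hi0⟩ : ∃ i0 : Fin m, ∀ j, A j j ≤ A i0 i0 :=
    Finite.exists_max (fun j => A j j)
  have stepA0 : (⨆ i, hA0.eigenvalues i) ≤ A i0 i0 := by
    apply ciSup_le
    intro k
    rw [eigen_eq hA0 k]
    set v := ⇑(hA0.eigenvectorBasis k) with hv'
    have hv : v ⬝ᵥ v = 1 := eigvec_unit hA0 k
    have hAv : v ⬝ᵥ (A *ᵥ v) = ∑ j, A j j * (v j)^2 := by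
      simp only [dotProduct, mulVec, dotProduct]
      refine Finset.sum_congr rfl fun i _ => ?_
      have hrow : ∑ j, A i j * v j = A i i * v i :=
        Finset.sum_eq_single i (fun j _ hj => by rw [hA fun h => hj h.symm, zero_mul])
          (fun h => absurd (Finset.mem_univ i) h)
      rw [hrow]; ring
    rw [hAv]
    have hsum1 : ∑ j, (v j)^2 = 1 := by
      rw [← hv]; simp [dotProduct, sq]
    calc ∑ j, A j j * (v j)^2
        ≤ ∑ j, A i0 i0 * (v j)^2 :=
          Finset.sum_le_sum fun j _ => mul_le_mul_of_nonneg_right (hi0 j) (sq_nonneg _)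
      _ = A i0 i0 := by rw [← Finset.mul_sum, hsum1, mul_one]
  have quad_single : ∀ (r : ℝ) (H : (A + r • B).IsHermitian),
      A i0 i0 ≤ ⨆ i, H.eigenvalues i := by
    intro r H
    have hsingle : (Pi.single i0 1 : Fin m → ℝ) ⬝ᵥ ((A + r • B) *ᵥ Pi.single i0 1)
        = A i0 i0 := by
      simp [dotProduct, mulVec, Pi.single_apply, Finset.mul_sum, hBdiag i0]
    have := quad_le_iSup H (Pi.single i0 1) (by simp [dotProduct, Pi.single_apply])
    rwa [hsingle] at this
  have stepA : (⨆ i, hA0.eigenvalues i) ≤ ⨆ i, htH.eigenvalues i :=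
    stepA0.trans (quad_single t htH)
  -- Step B : convexity
  set θ := s / t with hθ
  have hθ0 : 0 ≤ θ := div_nonneg hs ht.le
  have hθ1 : θ ≤ 1 := (div_le_one ht).mpr hst
  apply ciSup_le
  intro k
  rw [eigen_eq hsH k]
  set v := ⇑(hsH.eigenvectorBasis k) with hv'
  have hv : v ⬝ᵥ v = 1 := eigvec_unit hsH k
  have hsplit : v ⬝ᵥ ((A + s • B) *ᵥ v)
      = (1 - θ) * (v ⬝ᵥ (A *ᵥ v)) + θ * (v ⬝ᵥ ((A + t • B) *ᵥ v)) := by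
    simp only [add_mulVec, smul_mulVec, dotProduct_add, dotProduct_smul, smul_eq_mul, hθ]
    field_simp
    ring
  rw [hsplit]
  have h1 : v ⬝ᵥ (A *ᵥ v) ≤ ⨆ i, htH.eigenvalues i :=
    (quad_le_iSup hA0 v hv).trans stepA
  have h2 : v ⬝ᵥ ((A + t • B) *ᵥ v) ≤ ⨆ i, htH.eigenvalues i :=
    quad_le_iSup htH v hv
  calc (1 - θ) * (v ⬝ᵥ (A *ᵥ v)) + θ * (v ⬝ᵥ ((A + t • B) *ᵥ v))
      ≤ (1 - θ) * (⨆ i, htH.eigenvalues i) + θ * (⨆ i, htH.eigenvalues i) :=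
        add_le_add (mul_le_mul_of_nonneg_left h1 (by linarith))
          (mul_le_mul_of_nonneg_left h2 hθ0)
    _ = ⨆ i, htH.eigenvalues i := by ring
end
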